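/- A Kähler metric on a compact complex surface is Bach-flat if and only if it is extremal and satisfies s·r̊ + 2 Hess₀(s) = 0, where r̊ is the trace-free Ricci tensor and Hess₀(s) the trace-free Hessian of the scalar curvature. -/

import Mathlib

noncomputable section

open Matrix

/-- Abstract package of pointwise curvature data of a compact connected Kähler
surface `(M⁴, g, J)`, expressed in a local orthonormal frame: the scalar
curvature `s`, its gradient `∇s` and Hessian `∇∇s`, the trace-free Ricci
tensor `r̊`, and the complex structure `J`. -/
structure KahlerSurface where
  M : Type
  [topM : TopologicalSpace M]
  [cptM : CompactSpace M]
  [connM : ConnectedSpace M]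
  [neM : Nonempty M]
  /-- the scalar curvature `s` of the Kähler metric `g` -/
  s : M → ℝ
  s_cont : Continuous s
  /-- the components of the gradient `∇s` in an orthonormal frame -/
  grad_s : M → Fin 4 → ℝ
  /-- the components of the Hessian `∇∇s` in an orthonormal frame -/
  Hess_s : M → Matrix (Fin 4) (Fin 4) ℝ
  hess_symm : ∀ x, (Hess_s x)ᵀ = Hess_s x
  /-- the trace-free Ricci tensor `r̊` -/
  ricci0 : M → Matrix (Fin 4) (Fin 4) ℝ
  ricci0_symm : ∀ x, (ricci0 x)ᵀ = ricci0 x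
  ricci0_traceless : ∀ x, (ricci0 x).trace = 0
  /-- the complex structure `J` (an orthogonal almost complex structure) -/
  J : M → Matrix (Fin 4) (Fin 4) ℝ
  J_sq : ∀ x, J x * J x = -1
  J_orth : ∀ x, (J x)ᵀ * J x = 1
  /-- the Ricci tensor of a Kähler metric is `J`-invariant -/
  ricci0_Jinv : ∀ x, (J x)ᵀ * ricci0 x * J x = ricci0 x

attribute [instance] KahlerSurface.topM KahlerSurface.cptM KahlerSurface.connM
  KahlerSurface.neM

namespace KahlerSurface

variable (X : KahlerSurface)

/-- The geometer's (positive) Laplacian `Δs = -∇ᵃ∇ₐ s`. -/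
def lap (x : X.M) : ℝ := -(X.Hess_s x).trace

/-- `|∇s|²`. -/
def gradSq (x : X.M) : ℝ := ∑ i, (X.grad_s x i) ^ 2

/-- The trace-free Hessian `Hess₀(s)`. -/
def Hess0 (x : X.M) : Matrix (Fin 4) (Fin 4) ℝ :=
  X.Hess_s x - ((X.Hess_s x).trace / 4) • (1 : Matrix (Fin 4) (Fin 4) ℝ)

/-- The pullback `J*(A) = A(J·, J·)` of a symmetric 2-tensor. -/
def Jstar (x : X.M) (A : Matrix (Fin 4) (Fin 4) ℝ) : Matrix (Fin 4) (Fin 4) ℝ :=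
  (X.J x)ᵀ * A * X.J x

/-- The Kähler metric is extremal: `Hess(s)` is `J`-invariant, i.e. Calabi's
equation `∂̄∇^{1,0}s = 0` holds. -/
def Extremal : Prop := ∀ x, X.Jstar x (X.Hess_s x) = X.Hess_s x

/-- A Kähler surface is Bach-flat iff it is extremal and `s r̊ + 2 Hess₀(s) = 0`. -/
def BachFlat : Prop :=
  X.Extremal ∧ ∀ x, X.s x • X.ricci0 x + (2 : ℝ) • X.Hess0 x = 0

/-- The quantity `κ = -6 s Δs - 12 |∇s|² + s³`. -/
def kappa (x : X.M) : ℝ :=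
  -6 * X.s x * X.lap x - 12 * X.gradSq x + (X.s x) ^ 3

end KahlerSurface


/-- A compact connected Kähler surface together with its Bach tensor `B`.  The field
`bach_eq` records the decomposition of the Bach tensor of a Kähler surface into its
`J`-invariant and `J`-anti-invariant parts:
`B = (1/6)[s r̊ + 2 Hess₀^⊞(s)] + (1/12)[Hess(s) − J*Hess(s)]`,
where `Hess₀^⊞(s) = (1/2)(Hess₀(s) + J*Hess₀(s))` is the trace-free `J`-invariant
part of the Hessian of `s`. -/
structure KahlerSurfaceWithBach extends KahlerSurface where
  /-- the Bach tensor -/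
  bach : M → Matrix (Fin 4) (Fin 4) ℝ
  bach_eq : ∀ x, bach x =
    (1 / 6 : ℝ) • (s x • ricci0 x +
      ((Hess_s x - ((Hess_s x).trace / 4) • (1 : Matrix (Fin 4) (Fin 4) ℝ)) +
        (J x)ᵀ * (Hess_s x - ((Hess_s x).trace / 4) • (1 : Matrix (Fin 4) (Fin 4) ℝ)) *
          J x)) +
    (1 / 12 : ℝ) • (Hess_s x - (J x)ᵀ * Hess_s x * J x)

open Matrix in
lemma bach_matrix_key (J A R : Matrix (Fin 4) (Fin 4) ℝ) (s : ℝ)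
    (hJ2 : J * J = -1) (hJO : Jᵀ * J = 1) (hR : Jᵀ * R * J = R) :
    ((1/6:ℝ) • (s • R + ((A - (A.trace/4) • (1 : Matrix (Fin 4) (Fin 4) ℝ)) +
        Jᵀ * (A - (A.trace/4) • (1 : Matrix (Fin 4) (Fin 4) ℝ)) * J)) +
      (1/12:ℝ) • (A - Jᵀ * A * J) = 0) ↔
    (Jᵀ * A * J = A ∧
      s • R + (2:ℝ) • (A - (A.trace/4) • (1 : Matrix (Fin 4) (Fin 4) ℝ)) = 0) := by
  set c := A.trace / 4 with hc
  set B := Jᵀ * A * J with hB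
  have hconj1 : Jᵀ * (c • (1 : Matrix (Fin 4) (Fin 4) ℝ)) * J = c • 1 := by
    rw [Matrix.mul_smul, Matrix.smul_mul, Matrix.mul_one, hJO]
  have hconjH0 : Jᵀ * (A - c • (1 : Matrix (Fin 4) (Fin 4) ℝ)) * J = B - c • 1 := by
    rw [Matrix.mul_sub, Matrix.sub_mul, hconj1, hB]
  have hJJt : Jᵀ * Jᵀ = -1 := by
    have h := congrArg Matrix.transpose hJ2
    simpa [Matrix.transpose_mul] using h
  have hdouble : Jᵀ * B * J = A := by
    have : Jᵀ * (Jᵀ * A * J) * J = (Jᵀ * Jᵀ) * A * (J * J) := by noncomm_ring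
    rw [hB, this, hJJt, hJ2]
    simp
  constructor
  · intro h
    rw [hconjH0] at h
    -- conjugate the equation by J
    have h' : (1/6:ℝ) • (s • R + ((B - c • (1 : Matrix (Fin 4) (Fin 4) ℝ)) +
        (A - c • 1))) + (1/12:ℝ) • (B - A) = 0 := by
      have hc0 := congrArg (fun M => Jᵀ * M * J) h
      have expand : Jᵀ * ((1/6:ℝ) • (s • R + ((A - c • (1 : Matrix (Fin 4) (Fin 4) ℝ)) +
          (B - c • 1))) + (1/12:ℝ) • (A - B)) * J
          = (1/6:ℝ) • (s • R + ((B - c • (1 : Matrix (Fin 4) (Fin 4) ℝ)) +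
            (A - c • 1))) + (1/12:ℝ) • (B - A) := by
        simp only [Matrix.mul_add, Matrix.add_mul, Matrix.mul_smul, Matrix.smul_mul,
          Matrix.mul_sub, Matrix.sub_mul, hconj1, hdouble]
        rw [show Jᵀ * (1 : Matrix (Fin 4) (Fin 4) ℝ) * J = 1 from by
          rw [Matrix.mul_one, hJO], hR, ← hB]
      rw [expand] at hc0
      simpa using hc0
    have hAB : (1/6:ℝ) • (A - B) = 0 := by
      calc (1/6:ℝ) • (A - B)
          = ((1/6:ℝ) • (s • R + ((A - c • (1 : Matrix (Fin 4) (Fin 4) ℝ)) +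
              (B - c • 1))) + (1/12:ℝ) • (A - B))
            - ((1/6:ℝ) • (s • R + ((B - c • (1 : Matrix (Fin 4) (Fin 4) ℝ)) +
              (A - c • 1))) + (1/12:ℝ) • (B - A)) := by module
        _ = 0 := by rw [h, h', sub_zero]
    have hBA : B = A := by
      have h0 : A - B = 0 := by
        rcases smul_eq_zero.mp hAB with h6 | h0
        · norm_num at h6
        · exact h0
      exact (sub_eq_zero.mp h0).symm
    refine ⟨hB ▸ hBA, ?_⟩
    rw [hBA] at h
    calc s • R + (2:ℝ) • (A - c • (1 : Matrix (Fin 4) (Fin 4) ℝ))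
        = (6:ℝ) • ((1/6:ℝ) • (s • R + ((A - c • (1 : Matrix (Fin 4) (Fin 4) ℝ)) +
            (A - c • 1))) + (1/12:ℝ) • (A - A)) := by module
      _ = (6:ℝ) • (0 : Matrix (Fin 4) (Fin 4) ℝ) := by rw [h]
      _ = 0 := smul_zero _
  · rintro ⟨hBA, heq⟩
    rw [hconjH0, hBA]
    calc (1/6:ℝ) • (s • R + ((A - c • (1 : Matrix (Fin 4) (Fin 4) ℝ)) + (A - c • 1))) +
          (1/12:ℝ) • (A - A)
        = (1/6:ℝ) • (s • R + (2:ℝ) • (A - c • (1 : Matrix (Fin 4) (Fin 4) ℝ))) := by module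
      _ = (1/6:ℝ) • (0 : Matrix (Fin 4) (Fin 4) ℝ) := by rw [heq]
      _ = 0 := smul_zero _

/-- A Kähler metric on a compact complex surface is Bach-flat if and
only if it is extremal and satisfies `s·r̊ + 2 Hess₀(s) = 0`. -/
theorem bach_flat_iff_extremal_and_rico (X : KahlerSurfaceWithBach) :
    (∀ x, X.bach x = 0) ↔
      (X.toKahlerSurface.Extremal ∧
        ∀ x, X.s x • X.ricci0 x + (2 : ℝ) • X.toKahlerSurface.Hess0 x = 0) := by
  have key : ∀ x, (X.bach x = 0) ↔
      ((X.J x)ᵀ * X.Hess_s x * X.J x = X.Hess_s x ∧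
        X.s x • X.ricci0 x + (2:ℝ) • ((X.Hess_s x) -
          ((X.Hess_s x).trace / 4) • (1 : Matrix (Fin 4) (Fin 4) ℝ)) = 0) := by
    intro x
    rw [X.bach_eq x]
    exact bach_matrix_key (X.J x) (X.Hess_s x) (X.ricci0 x) (X.s x)
      (X.J_sq x) (X.J_orth x) (X.ricci0_Jinv x)
  constructor
  · intro h
    refine ⟨fun x => ((key x).mp (h x)).1, fun x => ((key x).mp (h x)).2⟩
  · rintro ⟨hext, heq⟩ x
    exact (key x).mpr ⟨hext x, heq x⟩
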